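/- Let P be a 2-torsion free unital ring with a nontrivial idempotent e₁ and let d : P → P be a commuting Jordan derivation. Then for every a ∈ e₁Pe₁ one has d(a) = e₁ d(a) e₁. -/

import Mathlib

/-- Lemma 2.3: for a ∈ e₁Pe₁, d(a) = e₁ d(a) e₁. -/
theorem commuting_jordan_derivation_eleven {P : Type*} [Ring P]
    (htf : ∀ p : P, 2 • p = 0 → p = 0)
    (e₁ : P) (he : e₁ * e₁ = e₁) (he0 : e₁ ≠ 0) (he1 : e₁ ≠ 1)
    (d : P → P)
    (hadd : ∀ x y : P, d (x + y) = d x + d y)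
    (hJ : ∀ p : P, d (p ^ 2) = d p * p + p * d p)
    (hC : ∀ p : P, d p * p = p * d p) :
    ∀ a : P, (∃ x : P, a = e₁ * x * e₁) → d a = e₁ * d a * e₁ := by
  -- First: d e₁ = 0
  have h1 : d e₁ = d e₁ * e₁ + e₁ * d e₁ := by
    have := hJ e₁; rwa [sq, he] at this
  have h2 : d e₁ = e₁ * d e₁ + e₁ * d e₁ := by
    nth_rewrite 1 [h1]
    rw [hC]
  have h3 : e₁ * d e₁ = e₁ * d e₁ + e₁ * d e₁ := by
    have h3' := congrArg (fun z => e₁ * z) h2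
    simpa only [mul_add, ← mul_assoc, he] using h3'
  have h4 : e₁ * d e₁ = 0 := left_eq_add.mp h3
  have hde : d e₁ = 0 := by rw [h2, h4, add_zero]
  rintro a ⟨x, rfl⟩
  set a := e₁ * x * e₁ with ha
  have hae : a * e₁ = a := by simp only [ha, mul_assoc, he]
  have hea : e₁ * a = a := by simp only [ha, ← mul_assoc, he]
  -- (a+e₁)^2 = a^2 + (a + a + e₁)
  have hsq : (a + e₁) ^ 2 = a ^ 2 + (a + a + e₁) := by
    rw [sq, sq, add_mul, mul_add, mul_add, hae, hea, he]
    abel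
  have hJae := hJ (a + e₁)
  rw [hsq, hadd, hadd, hadd, hJ, hde, add_zero] at hJae
  have key : d a + d a = d a * e₁ + e₁ * d a := by
    have expand : d (a + e₁) * (a + e₁) + (a + e₁) * d (a + e₁)
        = d a * a + a * d a + (d a * e₁ + e₁ * d a) := by
      rw [hadd, hde, add_zero, mul_add, add_mul]
      abel
    rw [expand] at hJae
    exact add_left_cancel hJae
  -- multiply key on left and right by e₁
  have hL : e₁ * d a = e₁ * d a * e₁ := by
    have := congrArg (fun z => e₁ * z) key
    simp only [mul_add, ← mul_assoc, he] at this
    exact add_right_cancel this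
  have hR : d a * e₁ = e₁ * d a * e₁ := by
    have := congrArg (fun z => z * e₁) key
    simp only [add_mul, mul_assoc, he] at this
    have this' : d a * e₁ + d a * e₁ = d a * e₁ + e₁ * (d a * e₁) := this
    have := add_left_cancel this'
    rw [this, mul_assoc]

  have hfin : d a + d a = e₁ * d a * e₁ + e₁ * d a * e₁ :=
    key.trans (congrArg₂ (· + ·) hR hL)
  have : 2 • (d a - e₁ * d a * e₁) = 0 := by
    rw [two_smul]
    rw [sub_add_sub_comm, hfin, sub_self]
  have h := htf _ this
  exact sub_eq_zero.mp h
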